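/- Suppose b k₀ = 0 and c k₀ = 0 for some k₀ : ZMod p, and b k ≠ 0 and c k ≠ 0 for every k : ZMod p with k ≠ k₀. Then: (a) every absolute nilpotent element x of E^n_{π,τ} satisfies x (l k) = 0 for all k ≠ k₀; (b) conversely, for every real number t there exists an absolute nilpotent element x of E^n_{π,τ} with x (l k₀) = t and x (l k) = 0 for all k ≠ k₀. -/

import Mathlib

/-- The product of the evolution algebra `E_{π,τ}(a)` on a finite type `ι`. -/
noncomputable def evolMul {ι : Type*} [Fintype ι] [DecidableEq ι]
    (π τ : Equiv.Perm ι) (a : ι → ι → ℝ) (x y : ι → ℝ) : ι → ℝ :=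
  fun j => ∑ i, x i * y i *
    ((if π i = j then a i (π i) else 0) + (if τ i = j then a i (τ i) else 0))

lemma evolMul_apply {ι : Type*} [Fintype ι] [DecidableEq ι]
    (π τ : Equiv.Perm ι) (a : ι → ι → ℝ) (x : ι → ℝ) (j : ι) :
    evolMul π τ a x x j =
      x (π⁻¹ j) * x (π⁻¹ j) * a (π⁻¹ j) j + x (τ⁻¹ j) * x (τ⁻¹ j) * a (τ⁻¹ j) j := by
  unfold evolMul
  simp only [mul_add, Finset.sum_add_distrib, mul_ite, mul_zero]
  congr 1
  · rw [Finset.sum_eq_single (π⁻¹ j)]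
    · simp
    · intro i _ hi
      rw [if_neg]
      intro h; exact hi (by rw [← h]; simp)
    · simp
  · rw [Finset.sum_eq_single (τ⁻¹ j)]
    · simp
    · intro i _ hi
      rw [if_neg]
      intro h; exact hi (by rw [← h]; simp)
    · simp

/-- along a cycle `l : ZMod p → Fin n` of `τ⁻¹ ∘ π`, if
`b k₀ = 0 = c k₀` for some `k₀` and `b k ≠ 0 ≠ c k` for all `k ≠ k₀`, then (a) every
absolute nilpotent `x` of `E^n_{π,τ}` vanishes at `l k` for all `k ≠ k₀`, and (b) for
every `t : ℝ` there is an absolute nilpotent `x` with `x (l k₀) = t` and `x (l k) = 0`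
for all `k ≠ k₀`. -/
theorem stmt_11 (n p : ℕ) [NeZero p] (π τ : Equiv.Perm (Fin n))
    (a : Fin n → Fin n → ℝ)
    (l : ZMod p → Fin n) (hl : Function.Injective l)
    (hcyc : ∀ k : ZMod p, τ⁻¹ (π (l k)) = l (k + 1))
    (b c : ZMod p → ℝ)
    (hb : ∀ k, b k = a (l k) (π (l k)))
    (hc : ∀ k, c k = a (l k) (τ (l k)))
    (k₀ : ZMod p) (hb0 : b k₀ = 0) (hc0 : c k₀ = 0)
    (hne : ∀ k : ZMod p, k ≠ k₀ → b k ≠ 0 ∧ c k ≠ 0) :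
    (∀ x : Fin n → ℝ, evolMul π τ a x x = 0 →
        ∀ k : ZMod p, k ≠ k₀ → x (l k) = 0) ∧
    (∀ t : ℝ, ∃ x : Fin n → ℝ, evolMul π τ a x x = 0 ∧ x (l k₀) = t ∧
        ∀ k : ZMod p, k ≠ k₀ → x (l k) = 0) := by
  have htau : ∀ k : ZMod p, τ (l (k + 1)) = π (l k) := by
    intro k
    have h := hcyc k
    rw [Equiv.Perm.inv_def, Equiv.symm_apply_eq] at h
    exact h.symm
  constructor
  · intro x hx
    -- key relation
    have key : ∀ k : ZMod p,
        x (l k) * x (l k) * b k + x (l (k + 1)) * x (l (k + 1)) * c (k + 1) = 0 := by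
      intro k
      have h := congrFun hx (π (l k))
      rw [evolMul_apply] at h
      rw [show π⁻¹ (π (l k)) = l k from π.symm_apply_apply _, hcyc k, ← hb k] at h
      rw [← htau k, ← hc (k + 1)] at h
      simpa using h
    -- inductive claim
    have main : ∀ m : ℕ, 0 < m → m < p → x (l (k₀ + (m : ZMod p))) = 0 := by
      intro m
      induction m with
      | zero => omega
      | succ m ih =>
        intro _ hmp
        have hnz : (((m + 1 : ℕ) : ZMod p)) ≠ 0 := by
          rw [Ne, ZMod.natCast_eq_zero_iff]
          exact fun h => absurd (Nat.le_of_dvd (Nat.succ_pos m) h) (by omega)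
        have hk1 : k₀ + ((m + 1 : ℕ) : ZMod p) ≠ k₀ := by
          intro h
          exact hnz (by linear_combination h)
        have hprev : x (l (k₀ + (m : ZMod p))) * x (l (k₀ + (m : ZMod p))) *
            b (k₀ + (m : ZMod p)) = 0 := by
          rcases Nat.eq_zero_or_pos m with hm0 | hm0
          · subst hm0; simp [hb0]
          · have := ih hm0 (by omega)
            rw [this]; ring
        have h := key (k₀ + (m : ZMod p))
        rw [hprev, zero_add] at h
        have harith : k₀ + (m : ZMod p) + 1 = k₀ + ((m + 1 : ℕ) : ZMod p) := by
          push_cast; ring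
        rw [harith] at h
        have hcne := (hne _ hk1).2
        have := mul_eq_zero.mp h
        rcases this with h' | h'
        · exact mul_self_eq_zero.mp h'
        · exact absurd h' hcne
    intro k hk
    have hv : ((ZMod.val (k - k₀) : ℕ) : ZMod p) = k - k₀ := by
      simp [ZMod.natCast_val, ZMod.cast_id]
    have hvpos : 0 < ZMod.val (k - k₀) := by
      rcases Nat.eq_zero_or_pos (ZMod.val (k - k₀)) with h0 | h0
      · exfalso
        have : k - k₀ = 0 := by rwa [ZMod.val_eq_zero] at h0
        exact hk (by linear_combination this)
      · exact h0
    have := main (ZMod.val (k - k₀)) hvpos (ZMod.val_lt _)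
    rwa [hv, add_sub_cancel] at this
  · intro t
    refine ⟨fun j => if j = l k₀ then t else 0, ?_, by simp, ?_⟩
    · funext j
      rw [evolMul_apply]
      have h1 : (if π⁻¹ j = l k₀ then t else 0) * (if π⁻¹ j = l k₀ then t else 0) *
          a (π⁻¹ j) j = 0 := by
        by_cases h : π⁻¹ j = l k₀
        · have hj : j = π (l k₀) := by rw [← h]; simp
          rw [h, hj, ← hb, hb0]; ring
        · rw [if_neg h]; ring
      have h2 : (if τ⁻¹ j = l k₀ then t else 0) * (if τ⁻¹ j = l k₀ then t else 0) *
          a (τ⁻¹ j) j = 0 := by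
        by_cases h : τ⁻¹ j = l k₀
        · have hj : j = τ (l k₀) := by rw [← h]; simp
          rw [h, hj, ← hc, hc0]; ring
        · rw [if_neg h]; ring
      simp only [Pi.zero_apply]
      rw [h1, h2, add_zero]
    · intro k hk
      simp only
      rw [if_neg (fun h => hk (hl h))]
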